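/- For every natural number t and every integer j, (1/(4π²)) ∫₀^{2π}∫₀^{2π} cos(jφ)·cos(tω)·(1 − cos 2φ) / (1 − 2 cos ω · cos φ + cos²φ) dω dφ = (1/π) ∫₀^{2π} cos(jφ)·(cos φ)^t dφ. -/

import Mathlib

open Real intervalIntegral MeasureTheory

lemma int_cos_int (k : ℤ) (hk : k ≠ 0) :
    ∫ ω in (0:ℝ)..(2*π), Real.cos (k * ω) = 0 := by
  have hc : (k:ℝ) ≠ 0 := Int.cast_ne_zero.mpr hk
  rw [intervalIntegral.integral_comp_mul_left Real.cos hc]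
  have hs : Real.sin ((k:ℝ) * (2*π)) = 0 := by
    have : ((k:ℝ) * (2*π)) = (2*k : ℤ) * π := by push_cast; ring
    rw [this, Real.sin_int_mul_pi]
  simp [integral_cos, hs]

lemma int_cos_nat (k : ℕ) :
    ∫ ω in (0:ℝ)..(2*π), Real.cos (k * ω) = if k = 0 then 2*π else 0 := by
  rcases Nat.eq_zero_or_pos k with h | h
  · simp [h]
  · have := int_cos_int k (by exact_mod_cast h.ne')
    simp only [Int.cast_natCast] at this
    rw [this, if_neg h.ne']

lemma orth (m n : ℕ) :
    ∫ ω in (0:ℝ)..(2*π), Real.cos (m * ω) * Real.cos (n * ω)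
      = if m = n then (if m = 0 then 2*π else π) else 0 := by
  have key : ∀ ω : ℝ, Real.cos (m * ω) * Real.cos (n * ω)
      = (Real.cos (((m+n : ℕ):ℝ) * ω) + Real.cos ((((m:ℤ) - n : ℤ):ℝ) * ω)) / 2 := by
    intro ω
    have h1 : (((m+n:ℕ)):ℝ)*ω = (m:ℝ)*ω + (n:ℝ)*ω := by push_cast; ring
    have h2 : ((((m:ℤ) - n : ℤ)):ℝ)*ω = (m:ℝ)*ω - (n:ℝ)*ω := by push_cast; ring
    rw [h1, h2, Real.cos_add, Real.cos_sub]; ring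
  simp only [key]
  rw [intervalIntegral.integral_div, intervalIntegral.integral_add
    (Continuous.intervalIntegrable (by fun_prop) _ _)
    (Continuous.intervalIntegrable (by fun_prop) _ _)]
  rw [int_cos_nat (m+n)]
  by_cases h : m = n
  · subst h
    have : ((((m:ℤ) - m : ℤ)):ℝ) = 0 := by push_cast; ring
    rw [this]
    simp only [zero_mul, Real.cos_zero, intervalIntegral.integral_const, smul_eq_mul, mul_one]
    by_cases hm : m = 0 <;> simp [hm]
  · have hmn : m + n ≠ 0 := by omega
    rw [int_cos_int ((m:ℤ) - n) (by omega), if_neg hmn, if_neg h]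
    norm_num


lemma poisson_series (r : ℝ) (hr : |r| < 1) (ω : ℝ) :
    HasSum (fun n : ℕ => 2 * r^(n+1) * Real.cos ((n+1 : ℕ) * ω))
      ((1 - r^2) / (1 - 2 * Real.cos ω * r + r^2) - 1) := by
  set c := Real.cos ω with hc
  set s := Real.sin ω with hs
  have hsc : s^2 + c^2 = 1 := Real.sin_sq_add_cos_sq ω
  have hrc1 : r * c < 1 := by
    calc r * c ≤ |r * c| := le_abs_self _
    _ = |r| * |c| := abs_mul _ _
    _ ≤ |r| * 1 := by
        have := Real.abs_cos_le_one ω; exact mul_le_mul_of_nonneg_left this (abs_nonneg r)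
    _ < 1 := by simpa using hr
  have hDpos : (0:ℝ) < 1 - 2 * c * r + r^2 := by
    nlinarith [sq_nonneg (1 - r*c), sq_nonneg (r*s)]
  have hD : (1:ℝ) - 2 * c * r + r^2 ≠ 0 := hDpos.ne'
  set z : ℂ := (r : ℂ) * Complex.exp (ω * Complex.I) with hz
  have hzre : z.re = r * c := by rw [hz]; simp [Complex.exp_ofReal_mul_I_re, hc]
  have hzim : z.im = r * s := by rw [hz]; simp [Complex.exp_ofReal_mul_I_im, hs]
  have hnz : ‖z‖ < 1 := by
    rw [hz]
    simpa [Complex.norm_exp_ofReal_mul_I, Complex.norm_real] using hr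
  have hgeo : HasSum (fun n : ℕ => z ^ n) (1 - z)⁻¹ := hasSum_geometric_of_norm_lt_one hnz
  have hre : HasSum (fun n : ℕ => ((2*z) * z ^ n).re) (((2*z) * (1 - z)⁻¹).re) :=
    Complex.hasSum_re (hgeo.mul_left (2*z))
  have hterm : ∀ n : ℕ, ((2*z) * z ^ n).re = 2 * r^(n+1) * Real.cos ((n+1 : ℕ) * ω) := by
    intro n
    have hzp : (2*z) * z ^ n = 2 * ((r^(n+1) : ℝ) : ℂ) * Complex.exp ((((n+1:ℕ):ℝ) * ω : ℝ) * Complex.I) := by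
      have : (2*z) * z^n = 2 * z^(n+1) := by ring
      rw [this, hz, mul_pow, ← Complex.exp_nat_mul]
      push_cast
      ring_nf
    rw [hzp]
    simp only [Complex.mul_re, Complex.ofReal_re, Complex.ofReal_im, Complex.mul_im]
    rw [Complex.exp_ofReal_mul_I_re, Complex.exp_ofReal_mul_I_im]
    simp only [Complex.re_ofNat, Complex.im_ofNat]
    push_cast
    ring
  have hnsD : Complex.normSq (1 - z) = 1 - 2 * c * r + r^2 := by
    rw [Complex.normSq_apply]
    simp only [Complex.sub_re, Complex.sub_im, Complex.one_re, Complex.one_im, hzre, hzim]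
    nlinarith [hsc]
  have hval : ((2*z) * (1 - z)⁻¹).re = (1 - r^2) / (1 - 2 * c * r + r^2) - 1 := by
    rw [show (2*z) * (1-z)⁻¹ = (2*z) / (1-z) by ring, Complex.div_re, hnsD]
    simp only [Complex.mul_re, Complex.mul_im, Complex.sub_re, Complex.sub_im, Complex.one_re,
      Complex.one_im, hzre, hzim, Complex.re_ofNat, Complex.im_ofNat]
    field_simp
    · have hD2 : (1:ℝ) - 2 * r * c + r^2 ≠ 0 := by
        rw [show (1:ℝ) - 2 * r * c + r^2 = 1 - 2 * c * r + r^2 by ring]; exact hD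
      rw [div_sub_one hD2, div_left_inj' hD2]
      linear_combination (-2*r^2) * hsc
  rw [← hval]
  exact hre.congr_fun (fun n => (hterm n).symm)

lemma poisson (r : ℝ) (hr : |r| < 1) (t : ℕ) :
    ∫ ω in (0:ℝ)..(2*π), Real.cos (t*ω) * ((1 - r^2) / (1 - 2*Real.cos ω * r + r^2))
      = 2*π*r^t := by
  have h2π : (0:ℝ) ≤ 2*π := by positivity
  set F : ℕ → ℝ → ℝ := fun n ω => Real.cos (t*ω) * (2 * r^(n+1) * Real.cos ((n+1 : ℕ) * ω)) with hF
  have hDpos : ∀ ω : ℝ, (0:ℝ) < 1 - 2*Real.cos ω * r + r^2 := by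
    intro ω
    have h1 : r * Real.cos ω < 1 := by
      calc r * Real.cos ω ≤ |r * Real.cos ω| := le_abs_self _
      _ = |r| * |Real.cos ω| := abs_mul _ _
      _ ≤ |r| * 1 := mul_le_mul_of_nonneg_left (Real.abs_cos_le_one ω) (abs_nonneg r)
      _ < 1 := by simpa using hr
    nlinarith [sq_nonneg (1 - r*Real.cos ω), sq_nonneg (r*Real.sin ω), Real.sin_sq_add_cos_sq ω]
  -- pointwise sum
  have hptw : ∀ ω : ℝ, HasSum (fun n => F n ω)
      (Real.cos (t*ω) * ((1 - r^2) / (1 - 2*Real.cos ω * r + r^2)) - Real.cos (t*ω)) := by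
    intro ω
    have := (poisson_series r hr ω).mul_left (Real.cos (t*ω))
    rw [mul_sub, mul_one] at this
    exact this
  -- integral of each term
  have hFint : ∀ n : ℕ, ∫ ω in (0:ℝ)..(2*π), F n ω
      = if t = n+1 then 2*π*r^t else 0 := by
    intro n
    have : ∀ ω, F n ω = (2 * r^(n+1)) * (Real.cos (t*ω) * Real.cos ((n+1:ℕ)*ω)) := by
      intro ω; rw [hF]; ring
    simp only [this]
    rw [intervalIntegral.integral_const_mul, orth t (n+1)]
    by_cases h : t = n+1
    · rw [if_pos h, if_pos h, if_neg (by omega)]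
      subst h; ring
    · simp [h]
  -- integrability
  have hFcont : ∀ n : ℕ, Continuous (F n) := by
    intro n; rw [hF]; fun_prop
  have hFi : ∀ n : ℕ, IntegrableOn (F n) (Set.Ioc (0:ℝ) (2*π)) volume := by
    intro n; exact (hFcont n).integrableOn_Ioc
  -- norm bounds
  have hμ : (volume (Set.Ioc (0:ℝ) (2*π))).toReal = 2*π := by
    simp [Real.volume_Ioc, ENNReal.toReal_ofReal h2π, Real.pi_pos.le]
  have hnormb : ∀ n : ℕ, ∀ ω : ℝ, ‖F n ω‖ ≤ 2 * |r|^(n+1) := by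
    intro n ω
    rw [hF]
    simp only [Real.norm_eq_abs, abs_mul, abs_pow]
    have h1 := Real.abs_cos_le_one (t*ω)
    have h2 := Real.abs_cos_le_one (((n:ℝ)+1)*ω)
    have h3 : (0:ℝ) ≤ |r|^(n+1) := by positivity
    push_cast
    have key : |Real.cos ((t:ℝ)*ω)| * |Real.cos (((n:ℝ)+1)*ω)| ≤ 1 :=
      mul_le_one₀ h1 (abs_nonneg _) h2
    have h4 : |(2:ℝ)| = 2 := by norm_num
    rw [h4]
    nlinarith [key, h3]
  have hb : ∀ n : ℕ, ∫ ω in Set.Ioc (0:ℝ) (2*π), ‖F n ω‖ ≤ (2*|r|^(n+1)) * (2*π) := by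
    intro n
    calc ∫ ω in Set.Ioc (0:ℝ) (2*π), ‖F n ω‖
        ≤ ‖∫ ω in Set.Ioc (0:ℝ) (2*π), ‖F n ω‖‖ := le_abs_self _
      _ ≤ (2*|r|^(n+1)) * (volume (Set.Ioc (0:ℝ) (2*π))).toReal := by
          refine MeasureTheory.norm_setIntegral_le_of_norm_le_const ?_ ?_
          · simp [Real.volume_Ioc]
            exact ENNReal.mul_lt_top ENNReal.ofNat_lt_top ENNReal.ofReal_lt_top
          · intro x _
            simp only [norm_norm]
            exact hnormb n x
      _ = (2*|r|^(n+1)) * (2*π) := by rw [hμ]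
  have hsummb : Summable (fun n : ℕ => (2*|r|^(n+1)) * (2*π)) := by
    have : Summable (fun n : ℕ => |r|^n) := summable_geometric_of_lt_one (abs_nonneg r) hr
    have h2 := (this.mul_left (2*(abs r)*(2*π)))
    apply h2.congr
    intro n
    rw [pow_succ]
    ring
  have hsumint : Summable (fun n : ℕ => ∫ ω in Set.Ioc (0:ℝ) (2*π), ‖F n ω‖) := by
    apply Summable.of_nonneg_of_le (fun n => integral_nonneg (fun ω => norm_nonneg _)) hb hsummb
  -- swap
  have hswap : HasSum (fun n : ℕ => ∫ ω in Set.Ioc (0:ℝ) (2*π), F n ω)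
      (∫ ω in Set.Ioc (0:ℝ) (2*π), ∑' n, F n ω) :=
    MeasureTheory.hasSum_integral_of_summable_integral_norm hFi hsumint
  -- identify the tsum integral
  have htsum_eq : ∀ ω : ℝ, (∑' n, F n ω)
      = Real.cos (t*ω) * ((1 - r^2) / (1 - 2*Real.cos ω * r + r^2)) - Real.cos (t*ω) :=
    fun ω => (hptw ω).tsum_eq
  -- value of sum of integrals
  have hval : (∑' n : ℕ, ∫ ω in Set.Ioc (0:ℝ) (2*π), F n ω)
      = if t = 0 then 0 else 2*π*r^t := by
    have heq : ∀ n : ℕ, (∫ ω in Set.Ioc (0:ℝ) (2*π), F n ω) = if t = n+1 then 2*π*r^t else 0 := by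
      intro n
      rw [← intervalIntegral.integral_of_le h2π]
      exact hFint n
    simp only [heq]
    rcases Nat.eq_zero_or_pos t with ht | ht
    · simp [ht]
    · rw [if_neg ht.ne']
      rw [tsum_eq_single (t-1) ?_]
      · rw [if_pos (by omega)]
      · intro n hn
        rw [if_neg (by omega)]
  -- main integrand continuous
  have hgcont : Continuous (fun ω => Real.cos (t*ω) * ((1 - r^2) / (1 - 2*Real.cos ω * r + r^2))) := by
    apply Continuous.mul (by fun_prop)
    apply Continuous.div continuous_const (by fun_prop)
    intro ω; exact (hDpos ω).ne'
  -- conclude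
  have hItsum : ∫ ω in (0:ℝ)..(2*π), (∑' n, F n ω)
      = (∫ ω in (0:ℝ)..(2*π), Real.cos (t*ω) * ((1 - r^2) / (1 - 2*Real.cos ω * r + r^2)))
        - ∫ ω in (0:ℝ)..(2*π), Real.cos (t*ω) := by
    rw [← intervalIntegral.integral_sub (hgcont.intervalIntegrable _ _)
      (Continuous.intervalIntegrable (by fun_prop) _ _)]
    apply intervalIntegral.integral_congr
    intro ω _
    exact htsum_eq ω
  have hcost : ∫ ω in (0:ℝ)..(2*π), Real.cos (t*ω) = if t = 0 then 2*π else 0 := by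
    exact int_cos_nat t
  have : (∫ ω in Set.Ioc (0:ℝ) (2*π), ∑' n, F n ω) = if t = 0 then 0 else 2*π*r^t := by
    rw [← hswap.tsum_eq, hval]
  rw [← intervalIntegral.integral_of_le h2π] at this
  rw [hItsum, hcost] at this
  by_cases ht : t = 0
  · rw [ht] at this ⊢
    norm_num at this ⊢
    linarith
  · rw [if_neg ht, if_neg ht] at this
    linarith

lemma inner_int (t : ℕ) (j : ℤ) (φ : ℝ) (hs : Real.sin φ ≠ 0) :
    (∫ ω in (0:ℝ)..(2 * π),
        Real.cos (j * φ) * Real.cos (t * ω) * (1 - Real.cos (2 * φ)) /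
          (1 - 2 * Real.cos ω * Real.cos φ + (Real.cos φ) ^ 2))
      = 4 * π * (Real.cos (j * φ) * (Real.cos φ) ^ t) := by
  have hsc := Real.sin_sq_add_cos_sq φ
  have hs2 : 0 < Real.sin φ ^ 2 := by positivity
  have hr : |Real.cos φ| < 1 := by
    rw [abs_lt]; constructor <;> nlinarith
  have key : ∀ ω : ℝ,
      Real.cos (j * φ) * Real.cos (t * ω) * (1 - Real.cos (2 * φ)) /
          (1 - 2 * Real.cos ω * Real.cos φ + (Real.cos φ) ^ 2)
      = (2 * Real.cos (j * φ)) *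
          (Real.cos (t * ω) * ((1 - (Real.cos φ)^2) /
            (1 - 2 * Real.cos ω * Real.cos φ + (Real.cos φ) ^ 2))) := by
    intro ω
    rw [Real.cos_two_mul]
    ring
  simp only [key]
  rw [intervalIntegral.integral_const_mul, poisson (Real.cos φ) hr t]
  ring

theorem stmt_3 (t : ℕ) (j : ℤ) :
    (1 / (4 * π ^ 2)) * ∫ φ in (0:ℝ)..(2 * π), ∫ ω in (0:ℝ)..(2 * π),
        Real.cos (j * φ) * Real.cos (t * ω) * (1 - Real.cos (2 * φ)) /
          (1 - 2 * Real.cos ω * Real.cos φ + (Real.cos φ) ^ 2)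
    = (1 / π) * ∫ φ in (0:ℝ)..(2 * π), Real.cos (j * φ) * (Real.cos φ) ^ t := by
  have hae : ∀ᵐ φ : ℝ ∂MeasureTheory.volume, Real.sin φ ≠ 0 := by
    have hS : MeasureTheory.volume (Set.range (fun n : ℤ => (n:ℝ) * π)) = 0 :=
      (Set.countable_range _).measure_zero _
    have := MeasureTheory.measure_eq_zero_iff_ae_notMem.mp hS
    filter_upwards [this] with x hx
    intro h
    rcases Real.sin_eq_zero_iff.mp h with ⟨n, hn⟩
    exact hx ⟨n, hn⟩
  have hcongr : (∫ φ in (0:ℝ)..(2 * π), ∫ ω in (0:ℝ)..(2 * π),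
        Real.cos (j * φ) * Real.cos (t * ω) * (1 - Real.cos (2 * φ)) /
          (1 - 2 * Real.cos ω * Real.cos φ + (Real.cos φ) ^ 2))
      = ∫ φ in (0:ℝ)..(2 * π), 4 * π * (Real.cos (j * φ) * (Real.cos φ) ^ t) := by
    apply intervalIntegral.integral_congr_ae
    filter_upwards [hae] with φ hφ _
    exact inner_int t j φ hφ
  rw [hcongr, intervalIntegral.integral_const_mul]
  have hπ : (π:ℝ) ≠ 0 := Real.pi_ne_zero
  field_simp
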